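/- arXiv:0912.1672 — 2 statements merged into one kernel-verified Lean document; each statement's English description precedes it below -/
import Mathlib

section
/- With the setup of finite minds M, finite brains B, and joint pmf p, define the Bayes error L* = min over all classifiers g : B → M of L(g). Then M statistically supervenes on B if and only if L* = 0. -/
def misclass {M B : Type*} [Fintype M] [Fintype B] [DecidableEq M]
    (p : M × B → ℝ) (g : B → M) : ℝ :=
  ∑ x : M × B, if g x.2 ≠ x.1 then p x else 0

/-- M statistically supervenes on B iff the Bayes error `L* = ⨅ g, L(g)` is zero. -/
theorem stmt_1 {M B : Type*} [Fintype M] [Fintype B] [Nonempty M] [Nonempty B]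
    [DecidableEq M] (p : M × B → ℝ)
    (hp : ∀ x, 0 ≤ p x) (hsum : ∑ x : M × B, p x = 1) :
    (∀ m m' : M, ∀ b : B, 0 < p (m, b) → 0 < p (m', b) → m = m') ↔
      (⨅ g : B → M, misclass p g) = 0 := by
  classical
  have hnn : ∀ g : B → M, 0 ≤ misclass p g := by
    intro g
    apply Finset.sum_nonneg
    intro x _
    split <;> [exact hp x; rfl]
  have hbdd : BddBelow (Set.range fun g : B → M => misclass p g) := by
    refine ⟨0, ?_⟩
    rintro _ ⟨g, rfl⟩
    exact hnn g
  constructor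
  · intro hsup
    -- build a perfect classifier
    have hterm : ∀ x : M × B,
        (if (fun b => if h : ∃ m, 0 < p (m, b) then h.choose else Classical.arbitrary M) x.2 ≠ x.1
          then p x else 0) = 0 := by
      rintro ⟨m, b⟩
      dsimp only
      rw [ite_eq_right_iff]
      intro hne
      by_contra hpx
      have hpos : 0 < p (m, b) := lt_of_le_of_ne (hp _) (Ne.symm hpx)
      have hex : ∃ m', 0 < p (m', b) := ⟨m, hpos⟩
      rw [dif_pos hex] at hne
      exact hne (hsup _ _ _ hex.choose_spec hpos)
    have hzero : misclass p (fun b => if h : ∃ m, 0 < p (m, b) then h.choose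
        else Classical.arbitrary M) = 0 := by
      unfold misclass
      exact Finset.sum_eq_zero fun x _ => hterm x
    refine le_antisymm ?_ ?_
    · calc ⨅ g : B → M, misclass p g ≤ _ := ciInf_le hbdd _
        _ = 0 := hzero
    · exact le_ciInf hnn
  · intro hinf m m' b hm hm'
    by_contra hne
    set ε := min (p (m, b)) (p (m', b)) with hε
    have hεpos : 0 < ε := lt_min hm hm'
    have hge : ∀ g : B → M, ε ≤ misclass p g := by
      intro g
      have key : ∃ x : M × B, ε ≤ (if g x.2 ≠ x.1 then p x else 0) := by
        by_cases h : g b = m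
        · refine ⟨(m', b), ?_⟩
          have : g b ≠ m' := by rw [h]; exact hne
          rw [if_pos this]
          exact min_le_right _ _
        · exact ⟨(m, b), by rw [if_pos h]; exact min_le_left _ _⟩
      obtain ⟨x, hx⟩ := key
      calc ε ≤ (if g x.2 ≠ x.1 then p x else 0) := hx
        _ ≤ misclass p g := by
          apply Finset.single_le_sum (f := fun y : M × B => if g y.2 ≠ y.1 then p y else 0)
            (fun y _ => by dsimp; split <;> [exact hp y; rfl]) (Finset.mem_univ x)
    have : ε ≤ 0 := hinf ▸ le_ciInf hge
    exact absurd this (not_le.mpr hεpos)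
end

section
/- Arbitrarily slow convergence at the level of Bernoulli parameters: for any sequence of sample sizes and any fixed n', and for any target power β < 1 and level α ∈ (0,1), there exists a parameter q < ε (depending on n') such that the probability that Binomial(n', q) ≤ k_α is less than β, where k_α is the largest k with ∑_{j≤k} C(n',j) ε^j (1−ε)^{n'−j} ≤ α. Hence no fixed n' guarantees power ≥ β over all alternatives q < ε. -/
open Finset

/-- Arbitrarily slow convergence: for any fixed hold-out size `n'` and rejection
threshold `kα` with size at most `α`, and any target power `β < 1`, there is an
alternative `q < ε` whose power is below `β`. -/
theorem stmt_17 (ε α β : ℝ) (hε0 : 0 < ε) (hε1 : ε < 1)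
    (hα : 0 < α) (hαβ : α < β) (hβ : β < 1)
    (n' : ℕ) (hn' : 0 < n') (kα : ℕ) (hkα : kα ≤ n')
    (hsize : ∑ j ∈ Finset.range (kα + 1),
        (n'.choose j : ℝ) * ε ^ j * (1 - ε) ^ (n' - j) ≤ α) :
    ∃ q : ℝ, 0 ≤ q ∧ q < ε ∧
      ∑ j ∈ Finset.range (kα + 1),
        (n'.choose j : ℝ) * q ^ j * (1 - q) ^ (n' - j) < β := by
  set f : ℝ → ℝ := fun q => ∑ j ∈ Finset.range (kα + 1),
      (n'.choose j : ℝ) * q ^ j * (1 - q) ^ (n' - j) with hf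
  have hcont : Continuous f := by
    apply continuous_finset_sum
    intro j _
    continuity
  have hfε : f ε < β := lt_of_le_of_lt hsize hαβ
  have hev : ∀ᶠ q in nhds ε, f q < β :=
    (hcont.continuousAt (x := ε)).eventually_lt continuousAt_const hfε
  have hne : (nhdsWithin ε (Set.Ioo 0 ε)).NeBot := by
    apply mem_closure_iff_nhdsWithin_neBot.mp
    rw [closure_Ioo (ne_of_lt hε0)]
    exact Set.right_mem_Icc.mpr hε0.le
  have hev' : ∀ᶠ q in nhdsWithin ε (Set.Ioo 0 ε), f q < β ∧ q ∈ Set.Ioo 0 ε :=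
    (hev.filter_mono nhdsWithin_le_nhds).and self_mem_nhdsWithin
  obtain ⟨q, hq, hqm⟩ := hev'.exists
  exact ⟨q, hqm.1.le, hqm.2, hq⟩
end
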